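/- arXiv:2501.07279 — 5 statements merged into one kernel-verified Lean document; each statement's English description precedes it below -/
import Mathlib

section
/- Let k ≤ n ≤ N be natural numbers, let G be a k×n matrix over F₂ = ZMod 2 of rank k, let Q be an invertible N×N matrix over F₂ (the generator matrix of a pruned polar code), let P be an N×N permutation matrix over F₂, and let S be a shortening matrix of size N×n. Then there exist an invertible k×k matrix E over F₂ and a k×N matrix M over F₂ in upper-trapezoidal (row-echelon) form such that G = E⁻¹ * M * Q * P * S; consequently the code {m * G : m ∈ F₂^k} equals {c * P * S : c ∈ C̃}, where C̃ = {m' * M * Q : m' ∈ F₂^k}. -/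
set_option synthInstance.maxHeartbeats 1000000
set_option maxHeartbeats 1000000
set_option linter.unusedVariables false
set_option linter.unnecessarySimpa false


open Matrix

/-- A shortening matrix: its columns are `n` distinct standard basis vectors of `F₂^N`. -/
def IsShorteningMatrix {N n : ℕ} (S : Matrix (Fin N) (Fin n) (ZMod 2)) : Prop :=
  ∃ s : Fin n → Fin N, Function.Injective s ∧ ∀ i j, S i j = if i = s j then 1 else 0

/-- A permutation matrix. -/
def IsPermMatrix {N : ℕ} (P : Matrix (Fin N) (Fin N) (ZMod 2)) : Prop :=
  ∃ σ : Equiv.Perm (Fin N), ∀ i j, P i j = if σ i = j then 1 else 0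

/-- Upper-trapezoidal (row-echelon) form. -/
def IsUpperTrapezoidal {k N : ℕ} (M : Matrix (Fin k) (Fin N) (ZMod 2)) : Prop :=
  ∃ p : Fin k → Fin N, StrictMono p ∧ (∀ i, M i (p i) = 1) ∧
    ∀ i j, j < p i → M i j = 0

lemma zmod2_eq_one {x : ZMod 2} (h : x ≠ 0) : x = 1 := by revert h; revert x; decide

/-- Gaussian-elimination core: any `k`-dimensional subspace of `F₂^N` has an
upper-trapezoidal matrix whose rows lie in it. -/
lemma exists_trapezoidal : ∀ (N k : ℕ) (V : Submodule (ZMod 2) (Fin N → ZMod 2)),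
    Module.finrank (ZMod 2) V = k →
    ∃ M : Matrix (Fin k) (Fin N) (ZMod 2), IsUpperTrapezoidal M ∧ ∀ i, M i ∈ V := by
  intro N
  induction N with
  | zero =>
    intro k V hk
    have h0 : Module.finrank (ZMod 2) (Fin 0 → ZMod 2) = 0 := by simp
    have hk0 : k = 0 := by
      have := Submodule.finrank_le V
      omega
    subst hk0
    exact ⟨fun i => i.elim0, ⟨fun i => i.elim0, fun a => a.elim0, fun i => i.elim0,
      fun i => i.elim0⟩, fun i => i.elim0⟩
  | succ N ih =>
    intro k V hk
    set T : (Fin (N+1) → ZMod 2) →ₗ[ZMod 2] (Fin N → ZMod 2) :=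
      LinearMap.funLeft (ZMod 2) (ZMod 2) (Fin.succ) with hTdef
    have consmem : ∀ (W : Submodule (ZMod 2) (Fin (N+1) → ZMod 2))
        (x : Fin N → ZMod 2), x ∈ W.map T → (∀ v ∈ W, v 0 = 0) →
        (Fin.cons 0 x : Fin (N+1) → ZMod 2) ∈ W := by
      intro W x hx hW0
      obtain ⟨v, hv, hTv⟩ := hx
      have : (Fin.cons 0 x : Fin (N+1) → ZMod 2) = v := by
        funext j
        rcases Fin.eq_zero_or_eq_succ j with rfl | ⟨j', rfl⟩
        · simp [hW0 v hv]
        · rw [Fin.cons_succ, ← hTv]; rfl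
      rw [this]; exact hv
    by_cases hall : ∀ v ∈ V, v 0 = 0
    · -- first coordinate vanishes on all of V
      have hinj : Function.Injective (T.comp V.subtype) := by
        rw [← LinearMap.ker_eq_bot, LinearMap.ker_eq_bot']
        rintro ⟨v, hv⟩ hv0
        have h1 : ∀ j : Fin N, v j.succ = 0 := fun j => congr_fun hv0 j
        ext j
        rcases Fin.eq_zero_or_eq_succ j with rfl | ⟨j', rfl⟩
        · exact hall v hv
        · exact h1 j'
      have hrange : LinearMap.range (T.comp V.subtype) = V.map T := by
        rw [LinearMap.range_comp, Submodule.range_subtype]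
      have hfr : Module.finrank (ZMod 2) (V.map T) = k := by
        rw [← hk, ← hrange]
        exact ((LinearEquiv.ofInjective _ hinj).finrank_eq).symm
      obtain ⟨M', ⟨p', hp'm, hp'1, hp'0⟩, hrows⟩ := ih k (V.map T) hfr
      refine ⟨fun i => Fin.cons 0 (M' i), ⟨Fin.succ ∘ p', Fin.strictMono_succ.comp hp'm,
        fun i => by simp [Fin.cons_succ, hp'1], ?_⟩, ?_⟩
      · intro i j hj
        rcases Fin.eq_zero_or_eq_succ j with rfl | ⟨j', rfl⟩
        · simp
        · show (Fin.cons 0 (M' i) : Fin (N+1) → ZMod 2) j'.succ = 0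
          rw [Fin.cons_succ]
          exact hp'0 i j' (by
            rw [Function.comp_apply, Fin.succ_lt_succ_iff] at hj
            exact hj)
      · intro i
        exact consmem V (M' i) (hrows i) hall
    · -- some vector of V has nonzero first coordinate
      push_neg at hall
      obtain ⟨v₀, hv₀V, hv₀0⟩ := hall
      have hv₀1 : v₀ 0 = 1 := zmod2_eq_one hv₀0
      set π : (Fin (N+1) → ZMod 2) →ₗ[ZMod 2] ZMod 2 :=
        LinearMap.proj 0 with hπdef
      set W : Submodule (ZMod 2) (Fin (N+1) → ZMod 2) := V ⊓ LinearMap.ker π with hWdef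
      have hW0 : ∀ v ∈ W, v 0 = 0 := by
        intro v hv
        exact (Submodule.mem_inf.mp hv).2
      have hWV : W ≤ V := inf_le_left
      set f : V →ₗ[ZMod 2] ZMod 2 := π.comp V.subtype with hfdef
      have hfsurj : Function.Surjective f := by
        intro a
        refine ⟨a • ⟨v₀, hv₀V⟩, ?_⟩
        simp [hfdef, hπdef, hv₀1]
      have hrn : Module.finrank (ZMod 2) (LinearMap.range f)
          + Module.finrank (ZMod 2) (LinearMap.ker f) = k := by
        rw [← hk]; exact LinearMap.finrank_range_add_finrank_ker f
      have hrange1 : Module.finrank (ZMod 2) (LinearMap.range f) = 1 := by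
        rw [LinearMap.range_eq_top.mpr hfsurj]
        simp
      have hker : LinearMap.ker f = W.comap V.subtype := by
        ext x
        simp [hfdef, hWdef, Submodule.mem_comap, LinearMap.mem_ker, x.2]
      have hWrank : Module.finrank (ZMod 2) W + 1 = k := by
        have heq : Module.finrank (ZMod 2) (W.comap V.subtype) = Module.finrank (ZMod 2) W :=
          (Submodule.comapSubtypeEquivOfLe hWV).finrank_eq
        rw [hker, heq] at hrn
        omega
      obtain ⟨k', rfl⟩ : ∃ k', k = k' + 1 := ⟨Module.finrank (ZMod 2) W, by omega⟩
      have hWk' : Module.finrank (ZMod 2) W = k' := by omega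
      have hinj : Function.Injective (T.comp W.subtype) := by
        rw [← LinearMap.ker_eq_bot, LinearMap.ker_eq_bot']
        rintro ⟨v, hv⟩ hv0
        have h1 : ∀ j : Fin N, v j.succ = 0 := fun j => congr_fun hv0 j
        ext j
        rcases Fin.eq_zero_or_eq_succ j with rfl | ⟨j', rfl⟩
        · exact hW0 v hv
        · exact h1 j'
      have hrange : LinearMap.range (T.comp W.subtype) = W.map T := by
        rw [LinearMap.range_comp, Submodule.range_subtype]
      have hfr : Module.finrank (ZMod 2) (W.map T) = k' := by
        rw [← hWk', ← hrange]
        exact ((LinearEquiv.ofInjective _ hinj).finrank_eq).symm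
      obtain ⟨M', ⟨p', hp'm, hp'1, hp'0⟩, hrows⟩ := ih k' (W.map T) hfr
      set M : Matrix (Fin (k'+1)) (Fin (N+1)) (ZMod 2) :=
        Fin.cons v₀ (fun i => Fin.cons 0 (M' i)) with hMdef
      set p : Fin (k'+1) → Fin (N+1) := Fin.cons 0 (fun i => (p' i).succ) with hpdef
      refine ⟨M, ⟨p, ?_, ?_, ?_⟩, ?_⟩
      · intro a b hab
        rcases Fin.eq_zero_or_eq_succ b with rfl | ⟨b', rfl⟩
        · exact absurd hab (Fin.not_lt_zero _)
        · rcases Fin.eq_zero_or_eq_succ a with rfl | ⟨a', rfl⟩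
          · simpa [hpdef] using Fin.succ_pos (p' b')
          · have hab' : a' < b' := by rwa [Fin.succ_lt_succ_iff] at hab
            simpa [hpdef, Fin.cons_succ] using Fin.succ_lt_succ_iff.mpr (hp'm hab')
      · intro i
        rcases Fin.eq_zero_or_eq_succ i with rfl | ⟨i', rfl⟩
        · simp [hMdef, hpdef, hv₀1]
        · simp [hMdef, hpdef, Fin.cons_succ, hp'1]
      · intro i j hj
        rcases Fin.eq_zero_or_eq_succ i with rfl | ⟨i', rfl⟩
        · exact absurd hj (by simp [hpdef])
        · rcases Fin.eq_zero_or_eq_succ j with rfl | ⟨j', rfl⟩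
          · simp [hMdef, Fin.cons_succ]
          · have hj' : j' < p' i' := by
              rw [hpdef, Fin.cons_succ, Fin.succ_lt_succ_iff] at hj
              exact hj
            simp [hMdef, Fin.cons_succ, hp'0 i' j' hj']
      · intro i
        rcases Fin.eq_zero_or_eq_succ i with rfl | ⟨i', rfl⟩
        · simpa [hMdef] using hv₀V
        · have : M i'.succ = Fin.cons 0 (M' i') := by simp [hMdef, Fin.cons_succ]
          rw [this]
          exact hWV (consmem W (M' i') (hrows i') hW0)

lemma trapezoidal_linearIndependent {k N : ℕ} {M : Matrix (Fin k) (Fin N) (ZMod 2)}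
    (h : IsUpperTrapezoidal M) : LinearIndependent (ZMod 2) M := by
  classical
  obtain ⟨p, hpm, hp1, hp0⟩ := h
  apply Fintype.linearIndependent_iff.mpr
  intro g hg
  by_contra hne
  push_neg at hne
  obtain ⟨i₀, hi₀⟩ := hne
  set Tset := Finset.univ.filter (fun i => g i ≠ 0) with hTset
  have hTne : Tset.Nonempty := ⟨i₀, by simp [hTset, hi₀]⟩
  set i := Tset.min' hTne with hidef
  have hgi : g i ≠ 0 := by
    have := Tset.min'_mem hTne
    simpa [hTset] using this
  have hlt : ∀ t, t < i → g t = 0 := by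
    intro t ht
    by_contra hgt
    exact absurd (Tset.min'_le t (by simp [hTset, hgt])) (not_le.mpr ht)
  have hev := congr_fun hg (p i)
  rw [Finset.sum_apply] at hev
  have hsum : ∑ t, (g t • M t) (p i) = g i := by
    rw [Finset.sum_eq_single i]
    · simp [hp1 i]
    · intro t _ hti
      rcases lt_or_gt_of_ne hti with h1 | h1
      · simp [hlt t h1]
      · simp [hp0 t (p i) (hpm h1)]
    · simp
  rw [hsum] at hev
  exact hgi (by simpa using hev)

lemma vecMul_eq_sum_rows {k N : ℕ} (x : Fin k → ZMod 2) (M : Matrix (Fin k) (Fin N) (ZMod 2)) :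
    x ᵥ* M = ∑ i, x i • M i := by
  funext j
  simp [Matrix.vecMul, dotProduct, Finset.sum_apply]

/-- Any `(n,k)`-binary linear block code can be transformed into a shortened, permuted
version of a pruned polar code with dynamic frozen bits. -/
theorem blbc_transform_shortened {k n N : ℕ} (hkn : k ≤ n) (hnN : n ≤ N)
    (G : Matrix (Fin k) (Fin n) (ZMod 2)) (hG : G.rank = k)
    (Q : Matrix (Fin N) (Fin N) (ZMod 2)) (hQ : IsUnit Q)
    (P : Matrix (Fin N) (Fin N) (ZMod 2)) (hP : IsPermMatrix P)
    (S : Matrix (Fin N) (Fin n) (ZMod 2)) (hS : IsShorteningMatrix S) :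
    ∃ (E : Matrix (Fin k) (Fin k) (ZMod 2)) (M : Matrix (Fin k) (Fin N) (ZMod 2)),
      IsUnit E ∧ IsUpperTrapezoidal M ∧
      G = E⁻¹ * (M * (Q * (P * S))) ∧
      {c : Fin n → ZMod 2 | ∃ m : Fin k → ZMod 2, c = m ᵥ* G} =
        {c : Fin n → ZMod 2 |
          ∃ cp ∈ {cp : Fin N → ZMod 2 | ∃ m' : Fin k → ZMod 2, cp = m' ᵥ* (M * Q)},
            c = cp ᵥ* (P * S)} := by
  classical
  obtain ⟨σ, hσ⟩ := hP
  obtain ⟨s, hsinj, hs⟩ := hS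
  have hPtP : Pᵀ * P = 1 := by
    ext a b
    rw [Matrix.mul_apply, Finset.sum_eq_single (σ.symm a)]
    · rw [Matrix.transpose_apply, hσ, hσ, Equiv.apply_symm_apply, if_pos rfl, one_mul,
        Matrix.one_apply]
    · intro t _ ht
      rw [Matrix.transpose_apply, hσ, if_neg, zero_mul]
      intro hc
      exact ht ((Equiv.eq_symm_apply σ).mpr hc)
    · simp
  have hStS : Sᵀ * S = 1 := by
    ext a b
    rw [Matrix.mul_apply, Finset.sum_eq_single (s a)]
    · rw [Matrix.transpose_apply, hs, hs, if_pos rfl, one_mul, Matrix.one_apply]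
      by_cases hab : a = b
      · simp [hab]
      · rw [if_neg (fun hc => hab (hsinj hc)), if_neg hab]
    · intro t _ ht
      rw [Matrix.transpose_apply, hs, if_neg ht, zero_mul]
    · simp
  have hSS : (P * S)ᵀ * (P * S) = 1 := by
    rw [Matrix.transpose_mul, Matrix.mul_assoc, ← Matrix.mul_assoc Pᵀ P S, hPtP,
      Matrix.one_mul, hStS]
  have hQdet : IsUnit Q.det := (Matrix.isUnit_iff_isUnit_det Q).mp hQ
  set M₀ : Matrix (Fin k) (Fin N) (ZMod 2) := G * (P * S)ᵀ * Q⁻¹ with hM₀def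
  have hG1 : (G * (P * S)ᵀ) * (P * S) = G := by
    rw [Matrix.mul_assoc, hSS, Matrix.mul_one]
  have hM0 : M₀ * (Q * (P * S)) = G := by
    rw [hM₀def, Matrix.mul_assoc (G * (P * S)ᵀ) Q⁻¹ _, ← Matrix.mul_assoc Q⁻¹ Q _,
      Matrix.nonsing_inv_mul Q hQdet, Matrix.one_mul, hG1]
  have hr1 : (G * (P * S)ᵀ).rank = k := by
    apply le_antisymm
    · calc (G * (P * S)ᵀ).rank ≤ G.rank := Matrix.rank_mul_le_left _ _
        _ = k := hG
    · calc k = G.rank := hG.symm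
        _ = ((G * (P * S)ᵀ) * (P * S)).rank := by rw [hG1]
        _ ≤ (G * (P * S)ᵀ).rank := Matrix.rank_mul_le_left _ _
  have hrM0 : M₀.rank = k := by
    rw [hM₀def, Matrix.rank_mul_eq_left_of_isUnit_det Q⁻¹ (G * (P * S)ᵀ)
      (Q.isUnit_nonsing_inv_det hQdet), hr1]
  have hV : Module.finrank (ZMod 2) (Submodule.span (ZMod 2) (Set.range M₀)) = k := by
    have := Matrix.rank_eq_finrank_span_row M₀; rw [hrM0] at this; exact this.symm
  obtain ⟨M, htrap, hrows⟩ := exists_trapezoidal N k _ hV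
  have hMind := trapezoidal_linearIndependent htrap
  have hcoef : ∀ i, ∃ c : Fin k → ZMod 2, ∑ t, c t • M₀ t = M i := fun i =>
    (Submodule.mem_span_range_iff_exists_fun (ZMod 2)).mp (hrows i)
  choose c hc using hcoef
  set E : Matrix (Fin k) (Fin k) (ZMod 2) := Matrix.of c with hEdef
  have hEM : E * M₀ = M := by
    ext i j
    rw [Matrix.mul_apply]
    have h1 := congr_fun (hc i) j
    rw [Finset.sum_apply] at h1
    simpa [smul_eq_mul, hEdef] using h1
  have hEunit : IsUnit E := by
    rw [← Matrix.vecMul_injective_iff_isUnit]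
    intro x y hxy
    have hsub : (x - y) ᵥ* E = 0 := by
      rw [Matrix.sub_vecMul, show x ᵥ* E = y ᵥ* E from hxy, sub_self]
    have h1 : (x - y) ᵥ* M = 0 := by
      rw [← hEM, ← Matrix.vecMul_vecMul, hsub, Matrix.zero_vecMul]
    rw [vecMul_eq_sum_rows] at h1
    have h2 := Fintype.linearIndependent_iff.mp hMind (x - y) h1
    funext i
    have h3 := h2 i
    rw [Pi.sub_apply, sub_eq_zero] at h3
    exact h3
  have hMQ : M * (Q * (P * S)) = E * G := by
    rw [← hEM, Matrix.mul_assoc, hM0]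
  have hEdet : IsUnit E.det := (Matrix.isUnit_iff_isUnit_det E).mp hEunit
  have hGeq : G = E⁻¹ * (M * (Q * (P * S))) := by
    rw [hMQ, ← Matrix.mul_assoc, Matrix.nonsing_inv_mul E hEdet, Matrix.one_mul]
  refine ⟨E, M, hEunit, htrap, hGeq, ?_⟩
  ext cvec
  simp only [Set.mem_setOf_eq]
  constructor
  · rintro ⟨m, rfl⟩
    refine ⟨(m ᵥ* E⁻¹) ᵥ* (M * Q), ⟨m ᵥ* E⁻¹, rfl⟩, ?_⟩
    rw [Matrix.vecMul_vecMul, Matrix.vecMul_vecMul, Matrix.mul_assoc M Q (P * S), ← hGeq]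
  · rintro ⟨cp, ⟨m', rfl⟩, rfl⟩
    refine ⟨m' ᵥ* E, ?_⟩
    rw [Matrix.vecMul_vecMul, Matrix.vecMul_vecMul, Matrix.mul_assoc M Q, hMQ]
end

section
/- Let k ≤ n ≤ N be natural numbers, let G be a k×n matrix over F₂ = ZMod 2 of rank k, let Q be an invertible N×N matrix over F₂, let P be an N×N permutation matrix over F₂, let S be a shortening matrix of size N×n, let E be an invertible k×k matrix over F₂, and let M be a k×N matrix over F₂ such that G = E⁻¹ * M * Q * P * S. Then the map c ↦ c * P * S is a bijection from the code C̃ = {m' * M * Q : m' ∈ F₂^k} onto the code C = {m * G : m ∈ F₂^k}; in particular the one-to-one correspondence between codewords is c = c_p * P * S. -/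
open Matrix

lemma vecMul_inj_of_rank {k n : ℕ} (G : Matrix (Fin k) (Fin n) (ZMod 2)) (hG : G.rank = k) :
    Function.Injective (fun m : Fin k → ZMod 2 => m ᵥ* G) := by
  have ht : Gᵀ.rank = k := by rw [Matrix.rank_transpose, hG]
  have hker : LinearMap.ker Gᵀ.mulVecLin = ⊥ := by
    have h1 := LinearMap.finrank_range_add_finrank_ker Gᵀ.mulVecLin
    rw [show Module.finrank (ZMod 2) (LinearMap.range Gᵀ.mulVecLin) = k from ht,
      Module.finrank_fin_fun] at h1
    have : Module.finrank (ZMod 2) (LinearMap.ker Gᵀ.mulVecLin) = 0 := by omega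
    exact Submodule.finrank_eq_zero.mp this
  intro a b hab
  have : Gᵀ.mulVecLin a = Gᵀ.mulVecLin b := by
    simpa [Matrix.mulVecLin_apply, Matrix.mulVec_transpose] using hab
  exact (LinearMap.ker_eq_bot.mp hker) this


open Matrix

/-- The map `c ↦ c * P * S` is a one-to-one correspondence between the codewords of the
transformed polar-like code `C̃ = {m' * M * Q}` and the codewords of the original
binary linear block code `C = {m * G}`. -/
theorem blbc_transform_bijective {k n N : ℕ} (hkn : k ≤ n) (hnN : n ≤ N)
    (G : Matrix (Fin k) (Fin n) (ZMod 2)) (hG : G.rank = k)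
    (Q : Matrix (Fin N) (Fin N) (ZMod 2)) (hQ : IsUnit Q)
    (P : Matrix (Fin N) (Fin N) (ZMod 2)) (hP : IsPermMatrix P)
    (S : Matrix (Fin N) (Fin n) (ZMod 2)) (hS : IsShorteningMatrix S)
    (E : Matrix (Fin k) (Fin k) (ZMod 2)) (hE : IsUnit E)
    (M : Matrix (Fin k) (Fin N) (ZMod 2))
    (hGdef : G = E⁻¹ * (M * (Q * (P * S)))) :
    Set.BijOn (fun c : Fin N → ZMod 2 => c ᵥ* (P * S))
      {cp : Fin N → ZMod 2 | ∃ m' : Fin k → ZMod 2, cp = m' ᵥ* (M * Q)}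
      {c : Fin n → ZMod 2 | ∃ m : Fin k → ZMod 2, c = m ᵥ* G} := by

  have hdet : IsUnit E.det := (Matrix.isUnit_iff_isUnit_det E).mp hE
  have hinv : E⁻¹ * E = 1 := Matrix.nonsing_inv_mul E hdet
  have hmul : E * E⁻¹ = 1 := Matrix.mul_nonsing_inv E hdet
  have key : ∀ m' : Fin k → ZMod 2, (m' ᵥ* (M * Q)) ᵥ* (P * S) = (m' ᵥ* E) ᵥ* G := by
    intro m'
    rw [hGdef, Matrix.vecMul_vecMul, Matrix.vecMul_vecMul, ← Matrix.mul_assoc,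
      ← Matrix.mul_assoc, hmul, Matrix.one_mul, Matrix.mul_assoc, Matrix.mul_assoc]
  refine ⟨?_, ?_, ?_⟩
  · rintro cp ⟨m', rfl⟩
    exact ⟨m' ᵥ* E, key m'⟩
  · rintro c1 ⟨m1, rfl⟩ c2 ⟨m2, rfl⟩ h
    simp only [key] at h
    have := vecMul_inj_of_rank G hG h
    have hm : m1 = m2 := by
      have h2 := congrArg (fun v => v ᵥ* E⁻¹) this
      simpa [Matrix.vecMul_vecMul, hmul] using h2
    rw [hm]
  · rintro c ⟨m, rfl⟩
    refine ⟨(m ᵥ* E⁻¹) ᵥ* (M * Q), ⟨m ᵥ* E⁻¹, rfl⟩, ?_⟩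
    show ((m ᵥ* E⁻¹) ᵥ* (M * Q)) ᵥ* (P * S) = m ᵥ* G
    rw [key, Matrix.vecMul_vecMul m E⁻¹ E, hinv, Matrix.vecMul_one]
end

section
/- Fix m ≥ 0 and identify indices of 2^m × 2^m matrices over F₂ = ZMod 2 with functions Fin m → Fin 2. Let A be any 2×2 matrix over F₂, let A^{⊗m} be the matrix with entries (A^{⊗m}) u v = ∏_i A (u i) (v i), and let B be the bit-reversal permutation matrix, B u v = if u = v ∘ rev then 1 else 0, where rev : Fin m → Fin m is the order-reversing bijection i ↦ m − 1 − i. Then B commutes with A^{⊗m}: B * A^{⊗m} = A^{⊗m} * B. Consequently, for Arıkan's kernel F₂ₖ = ![![1, 0], ![1, 1]], the polar transform G_N = B * F₂ₖ^{⊗m} satisfies G_N * G_N = I, so G_N is invertible. -/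
open Matrix

/-- Arıkan's 2×2 polarization kernel over `F₂`. -/
def arikanKernel : Matrix (Fin 2) (Fin 2) (ZMod 2) := !![1, 0; 1, 1]

/-- The `m`-fold Kronecker power of a 2×2 matrix, with indices of the
`2^m × 2^m` matrix identified with functions `Fin m → Fin 2`. -/
def kronPow (A : Matrix (Fin 2) (Fin 2) (ZMod 2)) (m : ℕ) :
    Matrix (Fin m → Fin 2) (Fin m → Fin 2) (ZMod 2) :=
  fun u v => ∏ i, A (u i) (v i)

/-- The bit-reversal permutation matrix, where `Fin.rev : Fin m → Fin m` is
the order-reversing bijection `i ↦ m - 1 - i`. -/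
def bitRev (m : ℕ) : Matrix (Fin m → Fin 2) (Fin m → Fin 2) (ZMod 2) :=
  fun u v => if u = v ∘ Fin.rev then 1 else 0

lemma bitRev_mul_apply {m : ℕ} (K : Matrix (Fin m → Fin 2) (Fin m → Fin 2) (ZMod 2))
    (u v : Fin m → Fin 2) : (bitRev m * K) u v = K (u ∘ Fin.rev) v := by
  rw [Matrix.mul_apply]
  have : ∀ w, bitRev m u w * K w v = if w = u ∘ Fin.rev then K w v else 0 := by
    intro w
    simp only [bitRev]
    by_cases h : w = u ∘ Fin.rev
    · subst h
      have : u = (u ∘ Fin.rev) ∘ Fin.rev := by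
        funext i; simp [Function.comp, Fin.rev_rev]
      simp [← this]
    · have h2 : ¬ u = w ∘ Fin.rev := by
        intro hu
        apply h
        funext i
        simp [hu, Function.comp, Fin.rev_rev]
      simp [h2, h]
  simp only [this]
  simp

lemma mul_bitRev_apply {m : ℕ} (K : Matrix (Fin m → Fin 2) (Fin m → Fin 2) (ZMod 2))
    (u v : Fin m → Fin 2) : (K * bitRev m) u v = K u (v ∘ Fin.rev) := by
  rw [Matrix.mul_apply]
  have : ∀ w, K u w * bitRev m w v = if w = v ∘ Fin.rev then K u w else 0 := by
    intro w
    simp only [bitRev]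
    by_cases h : w = v ∘ Fin.rev
    · simp [h]
    · simp [h]
  simp only [this]
  simp

lemma kronPow_mul {m : ℕ} (A A' : Matrix (Fin 2) (Fin 2) (ZMod 2)) :
    kronPow A m * kronPow A' m = kronPow (A * A') m := by
  ext u v
  rw [Matrix.mul_apply]
  simp only [kronPow, Matrix.mul_apply]
  rw [Fintype.prod_sum (fun i k => A (u i) k * A' k (v i))]
  simp [Finset.prod_mul_distrib]

lemma kronPow_one {m : ℕ} : kronPow 1 m = (1 : Matrix (Fin m → Fin 2) (Fin m → Fin 2) (ZMod 2)) := by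
  ext u v
  simp only [kronPow, Matrix.one_apply]
  by_cases h : u = v
  · simp [h]
  · obtain ⟨i, hi⟩ := Function.ne_iff.mp h
    rw [if_neg h]
    exact Finset.prod_eq_zero (Finset.mem_univ i) (by simp [hi])

lemma bitRev_sq {m : ℕ} : bitRev m * bitRev m = 1 := by
  ext u v
  rw [bitRev_mul_apply]
  simp only [bitRev, Matrix.one_apply]
  congr 1
  rw [eq_iff_iff]
  constructor
  · intro h
    funext i
    have := congrFun h (Fin.rev i)
    simpa [Function.comp, Fin.rev_rev] using this
  · rintro rfl
    rfl

/-- The bit-reversal permutation commutes with every `m`-fold Kronecker power of a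
2×2 matrix; consequently the polar transform `G_N = B_N * F₂^{⊗m}` squares to the
identity, hence is invertible. -/
theorem bitRev_comm_kronPow_and_polar_involutive (m : ℕ) :
    (∀ A : Matrix (Fin 2) (Fin 2) (ZMod 2),
      bitRev m * kronPow A m = kronPow A m * bitRev m) ∧
    (bitRev m * kronPow arikanKernel m) * (bitRev m * kronPow arikanKernel m) = 1 := by
  have comm : ∀ A : Matrix (Fin 2) (Fin 2) (ZMod 2),
      bitRev m * kronPow A m = kronPow A m * bitRev m := by
    intro A
    ext u v
    rw [bitRev_mul_apply, mul_bitRev_apply]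
    simp only [kronPow]
    calc ∏ i, A ((u ∘ Fin.rev) i) (v i)
        = ∏ i, A ((u ∘ Fin.rev) (Fin.rev i)) (v (Fin.rev i)) :=
          (Equiv.prod_comp Fin.revPerm (fun i => A ((u ∘ Fin.rev) i) (v i))).symm
      _ = ∏ i, A (u i) ((v ∘ Fin.rev) i) := by
          apply Finset.prod_congr rfl
          intro i _
          simp [Function.comp, Fin.rev_rev]
  refine ⟨comm, ?_⟩
  have hA : arikanKernel * arikanKernel = 1 := by
    decide
  calc (bitRev m * kronPow arikanKernel m) * (bitRev m * kronPow arikanKernel m)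
      = bitRev m * (kronPow arikanKernel m * bitRev m) * kronPow arikanKernel m := by
        rw [mul_assoc, mul_assoc, mul_assoc]
    _ = bitRev m * (bitRev m * kronPow arikanKernel m) * kronPow arikanKernel m := by
        rw [comm]
    _ = (bitRev m * bitRev m) * (kronPow arikanKernel m * kronPow arikanKernel m) := by
        noncomm_ring
    _ = 1 := by
        rw [bitRev_sq, kronPow_mul, hA, kronPow_one, one_mul]
end

section
/- Let Y be a finite type and let W : Fin 2 → Y → ℝ be a binary-input channel kernel with all values nonnegative. Define the plus-channel W⁺ : Fin 2 → (Y × Y × Fin 2) → ℝ by W⁺ u₂ (y₁, y₂, u₁) = (1/2) · W (u₁ + u₂) y₁ · W u₂ y₂ (addition of inputs in Fin 2 = ZMod 2). Then the Bhattacharyya parameter satisfies Z(W⁺) = Z(W)², where Z(W) = Σ_{y ∈ Y} √(W 0 y · W 1 y) and Z(W⁺) = Σ_{(y₁,y₂,u₁)} √(W⁺ 0 (y₁,y₂,u₁) · W⁺ 1 (y₁,y₂,u₁)). -/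
/-- The Bhattacharyya parameter of a binary-input channel kernel on a finite
output alphabet. -/
noncomputable def bhattacharyya {Y : Type*} [Fintype Y] (W : Fin 2 → Y → ℝ) : ℝ :=
  ∑ y : Y, Real.sqrt (W 0 y * W 1 y)

/-- Arıkan's plus-channel `W⁺ = W ⊛ W`, with output alphabet `Y × Y × Fin 2` and
`W⁺ u₂ (y₁, y₂, u₁) = (1/2) ⬝ W (u₁ + u₂) y₁ ⬝ W u₂ y₂` (input addition mod 2). -/
noncomputable def plusChannel {Y : Type*} (W : Fin 2 → Y → ℝ) : Fin 2 → Y × Y × Fin 2 → ℝ :=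
  fun u₂ p => (1 / 2) * W (p.2.2 + u₂) p.1 * W u₂ p.2.1

/-- `Z(W⁺) = Z(W)²`. -/
theorem bhattacharyya_plusChannel {Y : Type*} [Fintype Y] (W : Fin 2 → Y → ℝ)
    (hW : ∀ u y, 0 ≤ W u y) :
    bhattacharyya (plusChannel W) = (bhattacharyya W) ^ 2 := by
  have key : ∀ (y₁ y₂ : Y) (u₁ : Fin 2),
      Real.sqrt (plusChannel W 0 (y₁, y₂, u₁) * plusChannel W 1 (y₁, y₂, u₁))
        = 1 / 2 * (Real.sqrt (W 0 y₁ * W 1 y₁) * Real.sqrt (W 0 y₂ * W 1 y₂)) := by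
    intro y₁ y₂ u₁
    have h : plusChannel W 0 (y₁, y₂, u₁) * plusChannel W 1 (y₁, y₂, u₁)
        = (1 / 2) ^ 2 * ((W 0 y₁ * W 1 y₁) * (W 0 y₂ * W 1 y₂)) := by
      fin_cases u₁ <;> simp [plusChannel] <;> ring
    rw [h, Real.sqrt_mul (by positivity), Real.sqrt_sq (by norm_num),
      Real.sqrt_mul (mul_nonneg (hW 0 y₁) (hW 1 y₁))]
  have : bhattacharyya (plusChannel W)
      = ∑ y₁ : Y, ∑ y₂ : Y, ∑ u₁ : Fin 2,
          1 / 2 * (Real.sqrt (W 0 y₁ * W 1 y₁) * Real.sqrt (W 0 y₂ * W 1 y₂)) := by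
    rw [bhattacharyya, Fintype.sum_prod_type]
    refine Finset.sum_congr rfl fun y₁ _ => ?_
    rw [Fintype.sum_prod_type]
    exact Finset.sum_congr rfl fun y₂ _ => Finset.sum_congr rfl fun u₁ _ => key y₁ y₂ u₁
  rw [this]
  simp only [Fin.sum_univ_two]
  rw [bhattacharyya, sq, Finset.sum_mul_sum]
  refine Finset.sum_congr rfl fun y₁ _ => Finset.sum_congr rfl fun y₂ _ => by ring
end

section
/- Let Y be a finite type and let W : Fin 2 → Y → ℝ be a binary-input channel: W u y ≥ 0 for all u, y, and Σ_{y ∈ Y} W u y = 1 for each u ∈ Fin 2. Then the Bhattacharyya parameter satisfies 0 ≤ Z(W) ≤ 1, where Z(W) = Σ_{y ∈ Y} √(W 0 y · W 1 y). Consequently, the plus-channel satisfies Z(W⁺) = Z(W)² ≤ Z(W), so polarization makes the plus-channel at least as reliable as the original channel. -/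
/-- For a binary-input channel, `0 ≤ Z(W) ≤ 1`; consequently
`Z(W⁺) = Z(W)² ≤ Z(W)`. -/
theorem bhattacharyya_mem_unit_interval {Y : Type*} [Fintype Y] (W : Fin 2 → Y → ℝ)
    (hW : ∀ u y, 0 ≤ W u y) (hW1 : ∀ u : Fin 2, ∑ y : Y, W u y = 1) :
    0 ≤ bhattacharyya W ∧ bhattacharyya W ≤ 1 ∧
    bhattacharyya (plusChannel W) = (bhattacharyya W) ^ 2 ∧
    bhattacharyya (plusChannel W) ≤ bhattacharyya W := by
  have hZ0 : 0 ≤ bhattacharyya W :=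
    Finset.sum_nonneg fun y _ => Real.sqrt_nonneg _
  have hZ1 : bhattacharyya W ≤ 1 := by
    have h : ∀ y : Y, Real.sqrt (W 0 y * W 1 y) ≤ (W 0 y + W 1 y) / 2 := by
      intro y
      have h1 : W 0 y * W 1 y ≤ ((W 0 y + W 1 y) / 2) ^ 2 := by
        nlinarith [sq_nonneg (W 0 y - W 1 y)]
      calc Real.sqrt (W 0 y * W 1 y) ≤ Real.sqrt (((W 0 y + W 1 y) / 2) ^ 2) :=
            Real.sqrt_le_sqrt h1
        _ = (W 0 y + W 1 y) / 2 := Real.sqrt_sq (by linarith [hW 0 y, hW 1 y])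
    calc bhattacharyya W ≤ ∑ y : Y, (W 0 y + W 1 y) / 2 :=
          Finset.sum_le_sum fun y _ => h y
      _ = 1 := by
          rw [← Finset.sum_div, Finset.sum_add_distrib, hW1 0, hW1 1]; norm_num
  have hEq : bhattacharyya (plusChannel W) = (bhattacharyya W) ^ 2 := by
    have key : ∀ (u₁ : Fin 2) (y₁ y₂ : Y),
        Real.sqrt (plusChannel W 0 (y₁, y₂, u₁) * plusChannel W 1 (y₁, y₂, u₁)) =
        (1/2) * Real.sqrt (W 0 y₁ * W 1 y₁) * Real.sqrt (W 0 y₂ * W 1 y₂) := by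
      intro u₁ y₁ y₂
      simp only [plusChannel]
      have : (1 / 2 * W (u₁ + 0) y₁ * W 0 y₂) * (1 / 2 * W (u₁ + 1) y₁ * W 1 y₂)
          = (1/2)^2 * ((W 0 y₁ * W 1 y₁) * (W 0 y₂ * W 1 y₂)) := by
        fin_cases u₁ <;> simp <;> ring
      rw [this, Real.sqrt_mul (by positivity), Real.sqrt_mul (mul_nonneg (hW 0 y₁) (hW 1 y₁))]
      rw [Real.sqrt_sq (by norm_num : (0:ℝ) ≤ 1/2)]
      ring
    unfold bhattacharyya
    rw [Fintype.sum_prod_type]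
    simp only [Fintype.sum_prod_type, Fin.sum_univ_two]
    rw [sq]
    rw [Finset.sum_mul_sum]
    congr 1; ext y₁; congr 1; ext y₂
    rw [key 0 y₁ y₂, key 1 y₁ y₂]
    ring
  refine ⟨hZ0, hZ1, hEq, ?_⟩
  rw [hEq, sq]
  nlinarith
end
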